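/- Let E be a vector lattice and V a vector space, s ≥ 2, and P : E → V an s-homogeneous polynomial with symmetric generating s-linear map T. Then the following are equivalent: (1) P is a valuation; (2) P restricted to E⁺ is a valuation; (3) P has the Hammerstein property; (4) P restricted to E⁺ has the Hammerstein property; (5) T is orthosymmetric; (6) T restricted to (E⁺)^s is orthosymmetric. -/

import Mathlib

open Finset

section Aux

variable {E V : Type*} [AddCommGroup E] [Lattice E]
    [CovariantClass E E (· + ·) (· ≤ ·)] [Module ℝ E]
    [AddCommGroup V] [Module ℝ V] {s : ℕ}

private lemma sum_nonneg'' {ι : Type*} (t : Finset ι) {v : ι → E} (hv : ∀ k, 0 ≤ v k) :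
    (0 : E) ≤ ∑ k ∈ t, v k := by
  classical
  induction t using Finset.induction_on with
  | empty => simp
  | insert _ _ hnotmem ih =>
    rw [Finset.sum_insert hnotmem]
    exact add_nonneg (hv _) ih

/-- Expansion of the second difference of `P` along a three-fold decomposition. -/
private lemma key_expand (T : MultilinearMap ℝ (fun _ : Fin s => E) V)
    (P : E → V) (hP : ∀ x : E, P x = T (fun _ => x)) (x y z : E)
    (h0 : ∀ r : Fin s → Fin 3, (∃ a, r a = 0) → (∃ b, r b = 1) →
      T (![x, y, z] ∘ r) = 0) :
    P (x + y + z) - P (x + z) = P (y + z) - P z := by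
  classical
  have tri : ∀ k : Fin 3, k = 0 ∨ k = 1 ∨ k = 2 := by decide
  have expand : ∀ w : Fin 3 → E,
      P (w 0 + w 1 + w 2) = ∑ r : Fin s → Fin 3, T (w ∘ r) := by
    intro w
    rw [hP]
    have h1 : (fun _ : Fin s => w 0 + w 1 + w 2) = fun _ : Fin s => ∑ j : Fin 3, w j := by
      funext i; rw [Fin.sum_univ_three]
    rw [h1]
    exact T.map_sum (fun _ j => w j)
  have e1 : P (x + y + z) = ∑ r : Fin s → Fin 3, T (![x, y, z] ∘ r) := by
    have := expand ![x, y, z]; simpa using this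
  have e2 : P (x + z) = ∑ r : Fin s → Fin 3, T (![x, 0, z] ∘ r) := by
    have := expand ![x, 0, z]; simpa using this
  have e3 : P (y + z) = ∑ r : Fin s → Fin 3, T (![0, y, z] ∘ r) := by
    have := expand ![0, y, z]; simpa using this
  have e4 : P z = ∑ r : Fin s → Fin 3, T (![0, 0, z] ∘ r) := by
    have := expand ![0, 0, z]; simpa using this
  rw [e1, e2, e3, e4, ← Finset.sum_sub_distrib, ← Finset.sum_sub_distrib]
  apply Finset.sum_congr rfl
  intro r _
  by_cases hx : ∃ a, r a = 0
  · by_cases hy : ∃ b, r b = 1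
    · obtain ⟨a, ha⟩ := hx
      obtain ⟨b, hb⟩ := hy
      have z1 := h0 r ⟨a, ha⟩ ⟨b, hb⟩
      have z2 : T (![x, 0, z] ∘ r) = 0 := T.map_coord_zero b (by simp [hb])
      have z3 : T (![0, y, z] ∘ r) = 0 := T.map_coord_zero a (by simp [ha])
      have z4 : T (![0, 0, z] ∘ r) = 0 := T.map_coord_zero a (by simp [ha])
      rw [z1, z2, z3, z4]
    · -- no index maps to 1
      have hw1 : (![x, y, z] ∘ r) = (![x, 0, z] ∘ r) := by
        funext i
        rcases tri (r i) with h | h | h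
        · simp [Function.comp, h]
        · exact absurd ⟨i, h⟩ hy
        · simp [Function.comp, h]
      have hw2 : (![0, y, z] ∘ r) = (![0, 0, z] ∘ r) := by
        funext i
        rcases tri (r i) with h | h | h
        · simp [Function.comp, h]
        · exact absurd ⟨i, h⟩ hy
        · simp [Function.comp, h]
      rw [hw1, hw2]
      simp
  · -- no index maps to 0
    have hw1 : (![x, y, z] ∘ r) = (![0, y, z] ∘ r) := by
      funext i
      rcases tri (r i) with h | h | h
      · exact absurd ⟨i, h⟩ hx
      · simp [Function.comp, h]
      · simp [Function.comp, h]
    have hw2 : (![x, 0, z] ∘ r) = (![0, 0, z] ∘ r) := by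
      funext i
      rcases tri (r i) with h | h | h
      · exact absurd ⟨i, h⟩ hx
      · simp [Function.comp, h]
      · simp [Function.comp, h]
    rw [hw1, hw2]

end Aux

/-- Theorem: for an s-homogeneous polynomial `P` with symmetric generating s-linear map `T`
(`s ≥ 2`), the following are equivalent: (1) `P` is a valuation; (2) `P|E⁺` is a valuation;
(3) `P` has the Hammerstein property; (4) `P|E⁺` has the Hammerstein property;
(5) `T` is orthosymmetric; (6) `T|(E⁺)^s` is orthosymmetric. -/
theorem stmt11 {E V : Type*} [AddCommGroup E] [Lattice E]
    [CovariantClass E E (· + ·) (· ≤ ·)] [Module ℝ E]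
    [AddCommGroup V] [Module ℝ V] (s : ℕ) (hs : 2 ≤ s)
    (T : MultilinearMap ℝ (fun _ : Fin s => E) V)
    (hsymm : ∀ (v : Fin s → E) (σ : Equiv.Perm (Fin s)), T (v ∘ σ) = T v)
    (P : E → V) (hP : ∀ x : E, P x = T (fun _ => x)) :
    List.TFAE [
      ∀ x y : E, P x + P y = P (x ⊓ y) + P (x ⊔ y),
      ∀ x y : E, 0 ≤ x → 0 ≤ y → P x + P y = P (x ⊓ y) + P (x ⊔ y),
      ∀ x y z : E, |x| ⊓ |y| = 0 → P (x + y + z) - P (x + z) = P (y + z) - P z,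
      ∀ x y z : E, 0 ≤ x → 0 ≤ y → 0 ≤ z → x ⊓ y = 0 →
        P (x + y + z) - P (x + z) = P (y + z) - P z,
      ∀ v : Fin s → E, (∃ i j, i ≠ j ∧ |v i| ⊓ |v j| = 0) → T v = 0,
      ∀ v : Fin s → E, (∀ i, 0 ≤ v i) → (∃ i j, i ≠ j ∧ v i ⊓ v j = 0) → T v = 0 ] := by
  classical
  tfae_have 1 → 2
  · exact fun h x y _ _ => h x y
  tfae_have 2 → 4
  · intro h2 x y z hx hy hz hxy
    have hX : (0 : E) ≤ x + z := add_nonneg hx hz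
    have hY : (0 : E) ≤ y + z := add_nonneg hy hz
    have hinf : (x + z) ⊓ (y + z) = z := by rw [← inf_add, hxy, zero_add]
    have hsup : (x + z) ⊔ (y + z) = x + y + z := by
      have h := inf_add_sup (x + z) (y + z)
      rw [hinf] at h
      apply add_left_cancel (a := z)
      rw [h]; abel
    have hEq := h2 (x + z) (y + z) hX hY
    rw [hinf, hsup] at hEq
    rw [sub_eq_sub_iff_add_eq_add, add_comm (P (x + y + z)) (P z),
      add_comm (P (y + z)) (P (x + z))]
    exact hEq.symm
  tfae_have 4 → 6
  · intro h4 v hv hvd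
    obtain ⟨i, j, hij, hdisj⟩ := hvd
    -- inclusion–exclusion polarization
    set f : Finset (Fin s) → V :=
      fun S => ((-1 : ℤ)) ^ (s + S.card) • P (∑ k ∈ S, v k) with hf
    -- Step B : the alternating sum vanishes
    have hU1 : j ∈ Finset.univ.erase i := by
      simp [Finset.mem_erase, Ne.symm hij]
    have hUj : insert j ((Finset.univ.erase i).erase j) = Finset.univ.erase i :=
      Finset.insert_erase hU1
    have hUi : insert i (Finset.univ.erase i) = Finset.univ :=
      Finset.insert_erase (Finset.mem_univ i)
    have hiU : i ∉ insert j ((Finset.univ.erase i).erase j) := by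
      rw [hUj]; simp
    have hjU : j ∉ (Finset.univ.erase i).erase j := Finset.notMem_erase _ _
    set U := (Finset.univ.erase i).erase j with hUdef
    have stepB : ∑ S : Finset (Fin s), f S = 0 := by
      have : ∑ S : Finset (Fin s), f S = ∑ S ∈ (Finset.univ : Finset (Fin s)).powerset, f S := by
        rw [Finset.powerset_univ]
      rw [this, ← hUi, ← hUj, Finset.sum_powerset_insert hiU,
        Finset.sum_powerset_insert hjU, Finset.sum_powerset_insert hjU,
        ← Finset.sum_add_distrib, ← Finset.sum_add_distrib, ← Finset.sum_add_distrib]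
      apply Finset.sum_eq_zero
      intro t ht
      rw [Finset.mem_powerset] at ht
      have hjt : j ∉ t := fun h => hjU (ht h)
      have hit : i ∉ t := fun h => (Finset.mem_erase.mp (Finset.mem_erase.mp (ht h)).2).1 rfl
      have hijt : i ∉ insert j t := by
        simp only [Finset.mem_insert]
        rintro (h | h)
        · exact hij h
        · exact hit h
      have hz : (0 : E) ≤ ∑ k ∈ t, v k := sum_nonneg'' t hv
      have hcard1 : (insert j t).card = t.card + 1 := Finset.card_insert_of_notMem hjt
      have hcard2 : (insert i t).card = t.card + 1 := Finset.card_insert_of_notMem hit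
      have hcard3 : (insert i (insert j t)).card = t.card + 1 + 1 := by
        rw [Finset.card_insert_of_notMem hijt, hcard1]
      have hsum1 : ∑ k ∈ insert j t, v k = v j + ∑ k ∈ t, v k :=
        Finset.sum_insert hjt
      have hsum2 : ∑ k ∈ insert i t, v k = v i + ∑ k ∈ t, v k :=
        Finset.sum_insert hit
      have hsum3 : ∑ k ∈ insert i (insert j t), v k = v i + (v j + ∑ k ∈ t, v k) := by
        rw [Finset.sum_insert hijt, hsum1]
      have hH := h4 (v i) (v j) (∑ k ∈ t, v k) (hv i) (hv j) hz hdisj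
      simp only [hf, hcard1, hcard2, hcard3, hsum1, hsum2, hsum3]
      have hpow1 : ((-1 : ℤ)) ^ (s + (t.card + 1)) = -((-1 : ℤ) ^ (s + t.card)) := by
        rw [← Nat.add_assoc, pow_succ]; ring
      have hpow2 : ((-1 : ℤ)) ^ (s + (t.card + 1 + 1)) = (-1 : ℤ) ^ (s + t.card) := by
        rw [← Nat.add_assoc, ← Nat.add_assoc, pow_succ, pow_succ]; ring
      rw [hpow1, hpow2]
      have hassoc : v i + (v j + ∑ k ∈ t, v k) = v i + v j + ∑ k ∈ t, v k := by
        rw [add_assoc]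
      rw [hassoc]
      have key : P (∑ k ∈ t, v k) - P (v j + ∑ k ∈ t, v k)
          - P (v i + ∑ k ∈ t, v k) + P (v i + v j + ∑ k ∈ t, v k) = 0 := by
        have : P (v i + v j + ∑ k ∈ t, v k) - P (v i + ∑ k ∈ t, v k)
            - (P (v j + ∑ k ∈ t, v k) - P (∑ k ∈ t, v k)) = 0 := sub_eq_zero.mpr hH
        calc P (∑ k ∈ t, v k) - P (v j + ∑ k ∈ t, v k)
              - P (v i + ∑ k ∈ t, v k) + P (v i + v j + ∑ k ∈ t, v k)
            = P (v i + v j + ∑ k ∈ t, v k) - P (v i + ∑ k ∈ t, v k)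
              - (P (v j + ∑ k ∈ t, v k) - P (∑ k ∈ t, v k)) := by abel
          _ = 0 := this
      calc ((-1 : ℤ)) ^ (s + t.card) • P (∑ k ∈ t, v k)
            + (-((-1 : ℤ) ^ (s + t.card))) • P (v j + ∑ k ∈ t, v k)
            + ((-((-1 : ℤ) ^ (s + t.card))) • P (v i + ∑ k ∈ t, v k)
              + ((-1 : ℤ)) ^ (s + t.card) • P (v i + v j + ∑ k ∈ t, v k))
          = ((-1 : ℤ)) ^ (s + t.card) • (P (∑ k ∈ t, v k) - P (v j + ∑ k ∈ t, v k)
              - P (v i + ∑ k ∈ t, v k) + P (v i + v j + ∑ k ∈ t, v k)) := by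
            simp only [neg_smul, smul_sub, smul_add]
            abel
        _ = 0 := by rw [key, smul_zero]
    -- Step A : the alternating sum equals a positive multiple of `T v`
    have expand1 : ∀ S : Finset (Fin s),
        P (∑ k ∈ S, v k) = ∑ r ∈ Fintype.piFinset (fun _ : Fin s => S),
          T (fun k => v (r k)) := by
      intro S
      rw [hP]
      exact T.map_sum_finset (fun _ j => v j) (fun _ => S)
    have stepA : ∑ S : Finset (Fin s), f S
        = (Finset.univ.filter fun r : Fin s → Fin s => Function.Surjective r).card • T v := by
      have h1 : ∑ S : Finset (Fin s), f S
          = ∑ r : Fin s → Fin s,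
              (∑ S : Finset (Fin s), if (∀ k, r k ∈ S) then ((-1 : ℤ)) ^ (s + S.card) else 0)
                • T (fun k => v (r k)) := by
        have hstep : ∀ S : Finset (Fin s), f S
            = ∑ r : Fin s → Fin s,
                (if (∀ k, r k ∈ S) then ((-1 : ℤ)) ^ (s + S.card) else 0)
                  • T (fun k => v (r k)) := by
          intro S
          simp only [hf]
          rw [expand1 S, Finset.smul_sum]
          rw [show ∑ r ∈ Fintype.piFinset (fun _ : Fin s => S),
              ((-1 : ℤ)) ^ (s + S.card) • T (fun k => v (r k))
            = ∑ r ∈ (Finset.univ ∩ Fintype.piFinset (fun _ : Fin s => S)),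
              ((-1 : ℤ)) ^ (s + S.card) • T (fun k => v (r k)) from by
                rw [Finset.univ_inter]]
          rw [← Finset.sum_ite_mem]
          apply Finset.sum_congr rfl
          intro r _
          by_cases h : ∀ k, r k ∈ S
          · rw [if_pos h, if_pos (Fintype.mem_piFinset.mpr h)]
          · rw [if_neg h, if_neg (fun hh => h (Fintype.mem_piFinset.mp hh)), zero_smul]
        calc ∑ S : Finset (Fin s), f S
            = ∑ S : Finset (Fin s), ∑ r : Fin s → Fin s,
                (if (∀ k, r k ∈ S) then ((-1 : ℤ)) ^ (s + S.card) else 0)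
                  • T (fun k => v (r k)) := Finset.sum_congr rfl fun S _ => hstep S
          _ = ∑ r : Fin s → Fin s, ∑ S : Finset (Fin s),
                (if (∀ k, r k ∈ S) then ((-1 : ℤ)) ^ (s + S.card) else 0)
                  • T (fun k => v (r k)) := Finset.sum_comm
          _ = _ := by
                apply Finset.sum_congr rfl
                intro r _
                rw [Finset.sum_smul]
      have hc : ∀ r : Fin s → Fin s,
          (∑ S : Finset (Fin s), if (∀ k, r k ∈ S) then ((-1 : ℤ)) ^ (s + S.card) else 0)
          = if Function.Surjective r then 1 else 0 := by
        intro r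
        set R : Finset (Fin s) := Finset.univ.image r with hR
        have hmem : ∀ S : Finset (Fin s), (∀ k, r k ∈ S) ↔ R ⊆ S := by
          intro S
          rw [hR, Finset.image_subset_iff]
          simp
        have h2 : (∑ S : Finset (Fin s), if (∀ k, r k ∈ S) then ((-1 : ℤ)) ^ (s + S.card) else 0)
            = ∑ S ∈ Finset.univ.filter (fun S => R ⊆ S), ((-1 : ℤ)) ^ (s + S.card) := by
          rw [Finset.sum_filter]
          apply Finset.sum_congr rfl
          intro S _
          simp [hmem S]
        rw [h2]
        have h3 : ∑ S ∈ Finset.univ.filter (fun S => R ⊆ S), ((-1 : ℤ)) ^ (s + S.card)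
            = ∑ t ∈ Rᶜ.powerset, ((-1 : ℤ)) ^ (s + (R.card + t.card)) := by
          apply Finset.sum_bij' (i := fun S _ => S \ R) (j := fun t _ => R ∪ t)
          · intro S hS
            rw [Finset.mem_filter] at hS
            rw [Finset.mem_powerset]
            intro a ha
            rw [Finset.mem_sdiff] at ha
            rw [Finset.mem_compl]
            exact ha.2
          · intro t ht
            rw [Finset.mem_filter]
            exact ⟨Finset.mem_univ _, Finset.subset_union_left⟩
          · intro S hS
            rw [Finset.mem_filter] at hS
            rw [Finset.union_sdiff_self_eq_union, Finset.union_eq_right.mpr hS.2]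
          · intro t ht
            rw [Finset.mem_powerset] at ht
            rw [Finset.union_sdiff_cancel_left]
            rw [Finset.disjoint_left]
            intro a haR hat
            exact (Finset.mem_compl.mp (ht hat)) haR
          · intro S hS
            rw [Finset.mem_filter] at hS
            congr 1
            have := Finset.card_sdiff_add_card_eq_card hS.2
            omega
        rw [h3]
        have h4' : ∑ t ∈ Rᶜ.powerset, ((-1 : ℤ)) ^ (s + (R.card + t.card))
            = ((-1 : ℤ)) ^ (s + R.card) * ∑ t ∈ Rᶜ.powerset, ((-1 : ℤ)) ^ t.card := by
          rw [Finset.mul_sum]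
          apply Finset.sum_congr rfl
          intro t _
          rw [← pow_add, ← Nat.add_assoc]
        rw [h4', Finset.sum_powerset_neg_one_pow_card]
        by_cases hsurj : Function.Surjective r
        · have hRu : R = Finset.univ := Finset.image_univ_of_surjective hsurj
          rw [if_pos hsurj, hRu]
          have : (Finset.univ : Finset (Fin s))ᶜ = ∅ := by simp
          rw [this, if_pos rfl, mul_one, Finset.card_univ, Fintype.card_fin]
          exact Even.neg_one_pow ⟨s, rfl⟩
        · have hRne : R ≠ Finset.univ := by
            intro h
            apply hsurj
            intro b
            have : b ∈ R := h ▸ Finset.mem_univ b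
            rw [hR, Finset.mem_image] at this
            obtain ⟨a, _, ha⟩ := this
            exact ⟨a, ha⟩
          rw [if_neg hsurj]
          have : (Rᶜ : Finset (Fin s)) ≠ ∅ := by
            intro h
            apply hRne
            rwa [← Finset.compl_eq_empty_iff]
          rw [if_neg this, mul_zero]
      rw [h1]
      have h5 : ∀ r : Fin s → Fin s, Function.Surjective r → T (fun k => v (r k)) = T v := by
        intro r hr
        have hbij : Function.Bijective r := Finite.surjective_iff_bijective.mp hr
        have := hsymm v (Equiv.ofBijective r hbij)
        exact this
      calc ∑ r : Fin s → Fin s,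
              (∑ S : Finset (Fin s), if (∀ k, r k ∈ S) then ((-1 : ℤ)) ^ (s + S.card) else 0)
                • T (fun k => v (r k))
          = ∑ r : Fin s → Fin s,
              (if Function.Surjective r then (1 : ℤ) else 0) • T (fun k => v (r k)) := by
            apply Finset.sum_congr rfl
            intro r _
            rw [hc r]
        _ = ∑ r ∈ Finset.univ.filter (fun r : Fin s → Fin s => Function.Surjective r),
              T (fun k => v (r k)) := by
            rw [Finset.sum_filter]
            apply Finset.sum_congr rfl
            intro r _
            by_cases h : Function.Surjective r
            · rw [if_pos h, if_pos h, one_smul]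
            · rw [if_neg h, if_neg h, zero_smul]
        _ = ∑ r ∈ Finset.univ.filter (fun r : Fin s → Fin s => Function.Surjective r), T v := by
            apply Finset.sum_congr rfl
            intro r hr
            rw [Finset.mem_filter] at hr
            exact h5 r hr.2
        _ = _ := Finset.sum_const _
    -- combine
    have hNpos : 0 < (Finset.univ.filter fun r : Fin s → Fin s => Function.Surjective r).card := by
      apply Finset.card_pos.mpr
      exact ⟨id, Finset.mem_filter.mpr ⟨Finset.mem_univ _, Function.surjective_id⟩⟩
    set N := (Finset.univ.filter fun r : Fin s → Fin s => Function.Surjective r).card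
    have hN0 : (N : ℝ) • T v = 0 := by
      rw [Nat.cast_smul_eq_nsmul, ← stepA, stepB]
    have hNne : (N : ℝ) ≠ 0 := Nat.cast_ne_zero.mpr hNpos.ne'
    have := congrArg (fun w => (N : ℝ)⁻¹ • w) hN0
    simpa [smul_smul, inv_mul_cancel₀ hNne] using this
  tfae_have 6 → 5
  · intro h6 v hv
    obtain ⟨i, j, hij, hdisj⟩ := hv
    have hdecomp : v = fun k => ∑ b : Bool, (if b then (v k)⁺ else -((v k)⁻)) := by
      funext k
      rw [Fintype.sum_bool, if_pos rfl, if_neg (by decide)]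
      rw [← sub_eq_add_neg]
      exact (posPart_sub_negPart (v k)).symm
    have hms := T.map_sum (α := fun _ : Fin s => Bool)
      (g := fun k b => if b then (v k)⁺ else -((v k)⁻))
    rw [hdecomp, hms]
    apply Finset.sum_eq_zero
    intro r _
    have hterm : (fun k => if r k then (v k)⁺ else -((v k)⁻))
        = fun k => (if r k then (1 : ℝ) else -1) • (if r k then (v k)⁺ else (v k)⁻) := by
      funext k
      by_cases h : r k <;> simp [h]
    rw [hterm, T.map_smul_univ]
    have hu0 : T (fun k => if r k then (v k)⁺ else (v k)⁻) = 0 := by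
      apply h6
      · intro k
        by_cases h : r k <;> simp [h, posPart_nonneg, negPart_nonneg]
      · refine ⟨i, j, hij, ?_⟩
        have hle1 : (if r i then (v i)⁺ else (v i)⁻) ≤ |v i| := by
          by_cases h : r i <;> simp [h]
          · rw [← posPart_add_negPart (v i)]
            exact le_add_of_nonneg_right (negPart_nonneg _)
          · rw [← posPart_add_negPart (v i)]
            exact le_add_of_nonneg_left (posPart_nonneg _)
        have hle2 : (if r j then (v j)⁺ else (v j)⁻) ≤ |v j| := by
          by_cases h : r j <;> simp [h]
          · rw [← posPart_add_negPart (v j)]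
            exact le_add_of_nonneg_right (negPart_nonneg _)
          · rw [← posPart_add_negPart (v j)]
            exact le_add_of_nonneg_left (posPart_nonneg _)
        have hge : (0 : E) ≤ (if r i then (v i)⁺ else (v i)⁻) ⊓ (if r j then (v j)⁺ else (v j)⁻) := by
          apply le_inf
          · by_cases h : r i <;> simp [h, posPart_nonneg, negPart_nonneg]
          · by_cases h : r j <;> simp [h, posPart_nonneg, negPart_nonneg]
        have hle : (if r i then (v i)⁺ else (v i)⁻) ⊓ (if r j then (v j)⁺ else (v j)⁻)
            ≤ |v i| ⊓ |v j| := inf_le_inf hle1 hle2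
        rw [hdisj] at hle
        exact le_antisymm hle hge
    rw [hu0, smul_zero]
  tfae_have 5 → 3
  · intro h5 x y z hxy
    apply key_expand T P hP x y z
    intro r ⟨a, ha⟩ ⟨b, hb⟩
    apply h5
    refine ⟨a, b, ?_, ?_⟩
    · intro h
      rw [h, hb] at ha
      exact absurd ha (by decide)
    · have h1 : (![x, y, z] ∘ r) a = x := by simp [ha]
      have h2 : (![x, y, z] ∘ r) b = y := by simp [hb]
      rw [h1, h2]
      exact hxy
  tfae_have 3 → 1
  · intro h3 x y
    set m := x ⊓ y with hm
    have ha : (0 : E) ≤ x - m := sub_nonneg.mpr inf_le_left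
    have hb : (0 : E) ≤ y - m := sub_nonneg.mpr inf_le_right
    have hab : (x - m) ⊓ (y - m) = 0 := by
      rw [← inf_sub, ← hm, sub_self]
    have habs : |x - m| ⊓ |y - m| = 0 := by
      rw [abs_of_nonneg ha, abs_of_nonneg hb]; exact hab
    have h := h3 (x - m) (y - m) m habs
    have hx : x - m + m = x := sub_add_cancel x m
    have hy : y - m + m = y := sub_add_cancel y m
    have hsup : x - m + (y - m) + m = x ⊔ y := by
      have h2 := inf_add_sup x y
      rw [← hm] at h2
      apply add_left_cancel (a := m)
      rw [show m + (x - m + (y - m) + m) = x + y by abel, ← h2]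
    rw [hx, hy, hsup] at h
    have h2 := sub_eq_sub_iff_add_eq_add.mp h
    rw [add_comm (P x) (P y), add_comm (P m) (P (x ⊔ y))]
    exact h2.symm
  tfae_have 6 → 4
  · intro h6 x y z hx hy hz hxy
    apply key_expand T P hP x y z
    intro r ⟨a, ha⟩ ⟨b, hb⟩
    apply h6
    · intro k
      simp only [Function.comp]
      have tri : ∀ k : Fin 3, k = 0 ∨ k = 1 ∨ k = 2 := by decide
      rcases tri (r k) with h | h | h <;> simp [h, hx, hy, hz]
    · refine ⟨a, b, ?_, ?_⟩
      · intro h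
        rw [h, hb] at ha
        exact absurd ha (by decide)
      · have h1 : (![x, y, z] ∘ r) a = x := by simp [ha]
        have h2 : (![x, y, z] ∘ r) b = y := by simp [hb]
        rw [h1, h2]
        exact hxy
  tfae_finish
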